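/- Let B ⊆ ℕ^[n] be a set of monomials in y_1,...,y_n that is shifted, meaning: if j < i and y_i·m ∈ B then y_j·m ∈ B. If m·ℕ^σ ⊆ B is an admissible pair (m a monomial with support disjoint from σ) that is maximal among admissible pairs contained in B, then σ = [k] where k = max(σ), i.e., σ is an initial interval {1,...,k}. -/
import Mathlib


/-- A monomial in variables `y_i` (`i : ℕ`), identified with its exponent vector. -/
abbrev Mono : Type := ℕ →₀ ℕ

/-- Total degree of a monomial. -/
def mdeg (m : Mono) : ℕ := m.sum fun _ e => e

/-- The set of monomials `m·ℕ^σ`, i.e. products of `m` with monomials supported on `σ`. -/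
def pairSet (m : Mono) (σ : Finset ℕ) : Set Mono :=
  { x | ∃ t : Mono, t.support ⊆ σ ∧ x = m + t }

/-- `m·ℕ^σ` is an admissible pair of (the complement of) `B`:
`supp m ∩ σ = ∅` and `m·ℕ^σ ⊆ B`. -/
def Admissible (B : Set Mono) (m : Mono) (σ : Finset ℕ) : Prop :=
  Disjoint m.support σ ∧ pairSet m σ ⊆ B

/-- A standard pair: an inclusion-maximal admissible pair. -/
def IsStandardPair (B : Set Mono) (m : Mono) (σ : Finset ℕ) : Prop :=
  Admissible B m σ ∧
    ∀ (m' : Mono) (σ' : Finset ℕ), Admissible B m' σ' →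
      pairSet m σ ⊆ pairSet m' σ' → pairSet m σ = pairSet m' σ'

/-- `B` is shifted: if `1 ≤ j < i` and `y_i·m ∈ B` then `y_j·m ∈ B`. -/
def ShiftedSet (B : Set Mono) : Prop :=
  ∀ (m : Mono) (i j : ℕ), 1 ≤ j → j < i →
    m + Finsupp.single i 1 ∈ B → m + Finsupp.single j 1 ∈ B

/-- `B` is an order ideal of monomials: closed under divisibility. -/
def IsOrderIdeal (B : Set Mono) : Prop := ∀ m ∈ B, ∀ m' : Mono, m' ≤ m → m' ∈ B

/-- All monomials of `B` involve only the variables `y_1, ..., y_n`. -/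
def SupportedIn (B : Set Mono) (n : ℕ) : Prop := ∀ m ∈ B, m.support ⊆ Finset.Icc 1 n

/-- `m·ℕ^{i} ⊆ B`: all products of `m` with powers of `y_i` lie in `B`
(for `i = 0` this just means `m ∈ B`, the convention `ℕ^{∅} = {1}`). -/
def VarTower (B : Set Mono) (m : Mono) (i : ℕ) : Prop :=
  if i = 0 then m ∈ B else ∀ t : ℕ, m + Finsupp.single i t ∈ B

/-- `A_i(B) = { m ∈ ℕ^[i+1,n] : m·ℕ^{i} ⊆ B, m·ℕ^{i+1} ⊄ B }`. -/
def Aset (B : Set Mono) (n i : ℕ) : Set Mono :=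
  { m | m.support ⊆ Finset.Icc (i + 1) n ∧ VarTower B m i ∧ ¬ VarTower B m (i + 1) }

/-- Property (B4): if `m ∈ B ∩ ℕ^[k,n]` has degree `≥ k` then `m·ℕ^{k} ⊆ B`. -/
def HasB4 (B : Set Mono) (n : ℕ) : Prop :=
  ∀ (k : ℕ) (m : Mono), 1 ≤ k → m ∈ B → m.support ⊆ Finset.Icc k n → k ≤ mdeg m →
    ∀ t : ℕ, m + Finsupp.single k t ∈ B

/-- Every standard pair of a shifted (downward closed) set of monomials has an
initial interval `[k] = {1,...,k}` (with `k = max σ`) as its submonoid part;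
equivalently `σ = {1, ..., |σ|}`. -/
lemma shift_pow (B : Set Mono) (h1 : ShiftedSet B) {i j : ℕ} (hj : 1 ≤ j) (hji : j < i) :
    ∀ (c : ℕ) (u : Mono), u + Finsupp.single i c ∈ B → u + Finsupp.single j c ∈ B := by
  intro c
  induction c with
  | zero => simp
  | succ c ih =>
    intro u hu
    have e1 : (u + Finsupp.single i 1) + Finsupp.single i c = u + Finsupp.single i (c + 1) := by
      rw [add_assoc, ← Finsupp.single_add, add_comm 1 c]
    have h1' : (u + Finsupp.single i 1) + Finsupp.single i c ∈ B := by rw [e1]; exact hu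
    have h2' := ih (u + Finsupp.single i 1) h1'
    have e2 : (u + Finsupp.single i 1) + Finsupp.single j c
        = (u + Finsupp.single j c) + Finsupp.single i 1 := by
      rw [add_right_comm]
    rw [e2] at h2'
    have h4' := h1 (u + Finsupp.single j c) i j hj hji h2'
    rw [add_assoc, ← Finsupp.single_add] at h4'
    exact h4'


theorem standardPair_initial_interval
    (n : ℕ) (B : Set Mono) (h1 : ShiftedSet B) (h2 : IsOrderIdeal B)
    (h3 : SupportedIn B n) (m : Mono) (σ : Finset ℕ)
    (h : IsStandardPair B m σ) : σ = Finset.Icc 1 σ.card := by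
  obtain ⟨⟨hdisj, hsub⟩, hmax⟩ := h
  -- every element of σ is ≥ 1
  have hmem : ∀ i ∈ σ, m + Finsupp.single i 1 ∈ B := by
    intro i hi
    exact hsub ⟨Finsupp.single i 1, (Finsupp.support_single_subset).trans (by simpa using hi), rfl⟩
  have hpos : ∀ i ∈ σ, 1 ≤ i := by
    intro i hi
    have hB := hmem i hi
    have : i ∈ (m + Finsupp.single i 1).support := by
      rw [Finsupp.mem_support_iff]
      simp
    have := h3 _ hB this
    exact (Finset.mem_Icc.mp this).1
  -- downward closure
  have hdc : ∀ i ∈ σ, ∀ j, 1 ≤ j → j < i → j ∈ σ := by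
    intro i hi j hj hji
    by_contra hjσ
    set m' : Mono := m.erase j with hm'
    set σ' : Finset ℕ := insert j σ with hσ'
    have hmsplit : m = m' + Finsupp.single j (m j) := by
      rw [hm', add_comm]
      exact (Finsupp.single_add_erase j m).symm
    -- m' + t ∈ B for t supported in σ'
    have hadm : Admissible B m' σ' := by
      constructor
      · rw [hm', Finsupp.support_erase, hσ']
        rw [Finset.disjoint_insert_right]
        refine ⟨Finset.notMem_erase _ _, ?_⟩
        exact Finset.disjoint_of_subset_left (Finset.erase_subset _ _) hdisj
      · rintro x ⟨t, ht, rfl⟩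
        have htsplit : t = t.erase j + Finsupp.single j (t j) := by
          rw [add_comm]; exact (Finsupp.single_add_erase j t).symm
        have hte : (t.erase j).support ⊆ σ := by
          rw [Finsupp.support_erase]
          intro x hx
          have hx1 := Finset.mem_of_mem_erase hx
          have := ht hx1
          rw [hσ', Finset.mem_insert] at this
          rcases this with h | h
          · exact absurd h (Finset.ne_of_mem_erase hx)
          · exact h
        set u : Mono := m' + t.erase j with hu
        have hBi : u + Finsupp.single i (t j) ∈ B := by
          have hbig : m + (t.erase j + Finsupp.single i (t j)) ∈ B := by
            apply hsub
            refine ⟨t.erase j + Finsupp.single i (t j), ?_, rfl⟩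
            refine (Finsupp.support_add).trans ?_
            apply Finset.union_subset hte
            exact (Finsupp.support_single_subset).trans (by simpa using hi)
          apply h2 _ hbig
          rw [hu, hm']
          intro x
          simp only [Finsupp.add_apply]
          have : m.erase j x ≤ m x := by
            rw [Finsupp.erase_apply]
            split <;> omega
          omega
        have hBj := shift_pow B h1 hj hji (t j) u hBi
        have : u + Finsupp.single j (t j) = m' + t := by
          rw [hu, add_assoc]
          congr 1
          rw [add_comm]
          exact Finsupp.single_add_erase j t
        rwa [this] at hBj
    have hss : pairSet m σ ⊆ pairSet m' σ' := by
      rintro x ⟨t, ht, rfl⟩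
      refine ⟨Finsupp.single j (m j) + t, ?_, ?_⟩
      · refine (Finsupp.support_add).trans ?_
        apply Finset.union_subset
        · exact (Finsupp.support_single_subset).trans (by simp [hσ'])
        · exact ht.trans (Finset.subset_insert _ _)
      · rw [← add_assoc, ← hmsplit]
    have heq := hmax m' σ' hadm hss
    -- contradiction: m' + single j (m j + 1) is in the right set but not the left
    have hxin : m' + Finsupp.single j (m j + 1) ∈ pairSet m' σ' := by
      exact ⟨Finsupp.single j (m j + 1),
        (Finsupp.support_single_subset).trans (by simp [hσ']), rfl⟩
    rw [← heq] at hxin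
    obtain ⟨t, ht, hteq⟩ := hxin
    have htj : t j = 0 := by
      by_contra htj
      exact hjσ (ht (Finsupp.mem_support_iff.mpr htj))
    have := congrArg (fun f : Mono => f j) hteq
    simp only [Finsupp.add_apply, Finsupp.single_apply, if_pos rfl, htj] at this
    rw [hm'] at this
    simp [Finsupp.erase_apply] at this
  -- conclude σ = Icc 1 σ.card
  rcases σ.eq_empty_or_nonempty with rfl | hne
  · simp
  · have hk : σ = Finset.Icc 1 (σ.max' hne) := by
      ext x
      rw [Finset.mem_Icc]
      constructor
      · intro hx
        exact ⟨hpos x hx, Finset.le_max' σ x hx⟩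
      · rintro ⟨h1x, h2x⟩
        rcases lt_or_eq_of_le h2x with h2x | h2x
        · exact hdc _ (σ.max'_mem hne) x h1x h2x
        · rw [h2x]; exact σ.max'_mem hne
    rw [hk]
    congr 1
    rw [Nat.card_Icc]
    omega
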